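/- There exists a universal constant M₂ > 0 such that for all λ₁ ≥ λ₂ ≥ 1, if X ~ Poisson(λ₁), then (λ₁ - λ₂) P(X ≤ λ₂) ≤ M₂ √λ₂. -/

import Mathlib

open Real Finset

lemma quad_le_exp {y : ℝ} (hy : 0 ≤ y) : 1 + y + y^2/2 ≤ Real.exp y := by
  have h := Real.sum_le_exp_of_nonneg hy 3
  simp [Finset.sum_range_succ, Nat.factorial] at h
  nlinarith [h]

lemma xexp_le {x : ℝ} (hx : 0 ≤ x) : x * Real.exp (-(x/4)) ≤ 2 := by
  have h : 1 + x/4 + (x/4)^2/2 ≤ Real.exp (x/4) := quad_le_exp (by linarith)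
  have hp : (0:ℝ) < Real.exp (x/4) := Real.exp_pos _
  have hx2 : x ≤ 2 * Real.exp (x/4) := by nlinarith
  rw [Real.exp_neg, mul_inv_le_iff₀' hp]
  linarith

lemma poly_aux {u v : ℝ} (hu : 0 ≤ u) (hv2 : v * (2*(1+u)) = u*(u+2)) :
    1 + u ≤ Real.exp v := by
  have hd : (0:ℝ) < 1 + u := by linarith
  have h2d : (0:ℝ) < 2*(1+u) := by linarith
  have hv0 : 0 ≤ v := by
    have : 0 ≤ v * (2*(1+u)) := hv2 ▸ (by positivity : (0:ℝ) ≤ u*(u+2))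
    nlinarith [this, h2d]
  have e1 : v^2 * (2*(1+u))^2 = (u*(u+2))^2 := by
    rw [← mul_pow, hv2]
  have e2 : (u - v)*(2*(1+u))^2 = 2*u^2*(1+u) := by linear_combination (-2*(1+u))*hv2
  have hD : (0:ℝ) < (2*(1+u))^2 := by positivity
  have h4 : 2*u^2*(1+u) ≤ (u*(u+2))^2/2 := by nlinarith [sq_nonneg (u*u)]
  have h1 : u - v ≤ v^2/2 := le_of_mul_le_mul_right (by nlinarith [e1, e2, h4]) hD
  calc 1 + u ≤ 1 + v + v^2/2 := by linarith
    _ ≤ Real.exp v := quad_le_exp hv0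

lemma one_add_le_exp_quad {u : ℝ} (hu : 0 ≤ u) :
    1 + u ≤ Real.exp (u - u^2/(2*(1+u))) := by
  apply poly_aux hu
  have hd : (0:ℝ) < 1 + u := by linarith
  field_simp
  ring

lemma factorial_ge {n : ℕ} (hn : 1 ≤ n) :
    Real.sqrt (2*n) * ((n:ℝ) / Real.exp 1)^n ≤ (n.factorial : ℝ) := by
  have h1 : Real.sqrt π ≤ Stirling.stirlingSeq n := by
    obtain ⟨m, rfl⟩ : ∃ m, n = m + 1 := ⟨n - 1, by omega⟩
    have ht : Filter.Tendsto (Stirling.stirlingSeq ∘ Nat.succ) Filter.atTop (nhds (√π)) :=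
      Stirling.tendsto_stirlingSeq_sqrt_pi.comp (Filter.tendsto_add_atTop_nat 1)
    exact Stirling.stirlingSeq'_antitone.le_of_tendsto ht m
  have hpi : (1:ℝ) ≤ Real.sqrt π := by
    rw [show (1:ℝ) = Real.sqrt 1 by simp]
    exact Real.sqrt_le_sqrt (by linarith [Real.pi_gt_three])
  have h2 : (1:ℝ) ≤ Stirling.stirlingSeq n := le_trans hpi h1
  have hn0 : (0:ℝ) < n := by exact_mod_cast hn
  have hden : (0:ℝ) < Real.sqrt (2*n) * ((n:ℝ) / Real.exp 1)^n := by positivity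
  rw [Stirling.stirlingSeq, le_div_iff₀ hden] at h2
  linarith

set_option maxHeartbeats 1000000 in
/-- There is a universal constant `M₂ > 0` such that for all `λ₁ ≥ λ₂ ≥ 1`, if
`X ~ Poisson(λ₁)`, then `(λ₁ - λ₂) P(X ≤ λ₂) ≤ M₂ √λ₂`. -/
theorem stmt_5 :
    ∃ M₂ : ℝ, 0 < M₂ ∧ ∀ lam₁ lam₂ : ℝ, 1 ≤ lam₂ → lam₂ ≤ lam₁ →
      (lam₁ - lam₂) *
          (∑' k : ℕ, if (k : ℝ) ≤ lam₂ then
            Real.exp (-lam₁) * lam₁ ^ k / (k.factorial : ℝ) else 0)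
        ≤ M₂ * Real.sqrt lam₂ := by
  refine ⟨4, by norm_num, ?_⟩
  intro lam₁ lam₂ h1 h2
  set n := ⌊lam₂⌋₊ with hn
  have hl2 : (0:ℝ) < lam₂ := by linarith
  have hl1 : (0:ℝ) < lam₁ := by linarith
  have hn1 : 1 ≤ n := Nat.le_floor (by exact_mod_cast h1)
  have hnle : (n:ℝ) ≤ lam₂ := Nat.floor_le hl2.le
  have hlt : lam₂ < n+1 := Nat.lt_floor_add_one _
  have hn0 : (0:ℝ) < n := by exact_mod_cast hn1
  -- tsum is a finite sum
  have hsum : (∑' k : ℕ, if (k:ℝ) ≤ lam₂ then Real.exp (-lam₁) * lam₁^k / (k.factorial:ℝ) else 0)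
      = ∑ k ∈ Finset.range (n+1), Real.exp (-lam₁) * lam₁^k / (k.factorial:ℝ) := by
    rw [tsum_eq_sum (s := Finset.range (n+1)) ?_]
    · refine Finset.sum_congr rfl fun k hk => ?_
      rw [if_pos]
      have hkn : k ≤ n := Nat.lt_succ_iff.mp (Finset.mem_range.mp hk)
      exact le_trans (by exact_mod_cast hkn) hnle
    · intro b hb
      rw [if_neg]
      push_neg
      have hbn : n + 1 ≤ b := by
        by_contra hc; exact hb (Finset.mem_range.mpr (by omega))
      calc lam₂ < n + 1 := hlt
        _ ≤ b := by exact_mod_cast hbn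
  rw [hsum]
  set r := lam₂/lam₁ with hr
  have hr0 : 0 ≤ r := by positivity
  have hr1 : r ≤ 1 := (div_le_one hl1).mpr h2
  -- step/chain bound on terms
  have key : ∀ j k, k + j = n → lam₁^k/(k.factorial:ℝ) ≤ r^j * (lam₁^n/(n.factorial:ℝ)) := by
    intro j
    induction j with
    | zero =>
      intro k hk
      simp only [Nat.add_zero] at hk
      subst hk
      simp
    | succ j ih =>
      intro k hk
      have hk' : (k+1) + j = n := by omega
      have hih := ih (k+1) hk'
      have hkl : ((k:ℝ)+1) ≤ lam₂ := by
        have : k + 1 ≤ n := by omega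
        calc ((k:ℝ)+1) ≤ (n:ℝ) := by exact_mod_cast this
          _ ≤ lam₂ := hnle
      have hstep : lam₁^k/(k.factorial:ℝ) ≤ r * (lam₁^(k+1)/((k+1).factorial:ℝ)) := by
        rw [hr]
        have hkf : (0:ℝ) < (k.factorial:ℝ) := by exact_mod_cast k.factorial_pos
        have hkf1 : (0:ℝ) < ((k+1).factorial:ℝ) := by exact_mod_cast (k+1).factorial_pos
        rw [div_le_iff₀ hkf]
        have hexp : (((k+1).factorial:ℝ)) = ((k:ℝ)+1) * (k.factorial:ℝ) := by
          rw [Nat.factorial_succ]; push_cast; ring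
        have hpow : lam₁^(k+1) = lam₁^k * lam₁ := by ring
        rw [hexp, hpow]
        have h0 : (0:ℝ) ≤ lam₁^k := by positivity
        have expand : lam₂/lam₁ * (lam₁^k*lam₁/(((k:ℝ)+1)*(k.factorial:ℝ))) * (k.factorial:ℝ)
            = lam₁^k * (lam₂/((k:ℝ)+1)) := by
          field_simp
        rw [expand]
        have : (1:ℝ) ≤ lam₂/((k:ℝ)+1) := by
          rw [le_div_iff₀ (by positivity)]
          linarith
        nlinarith [h0]
      calc lam₁^k/(k.factorial:ℝ) ≤ r * (lam₁^(k+1)/((k+1).factorial:ℝ)) := hstep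
        _ ≤ r * (r^j * (lam₁^n/(n.factorial:ℝ))) := by
            exact mul_le_mul_of_nonneg_left hih hr0
        _ = r^(j+1) * (lam₁^n/(n.factorial:ℝ)) := by ring
  have hsum2 : ∑ k ∈ Finset.range (n+1), lam₁^k/(k.factorial:ℝ)
      ≤ (∑ j ∈ Finset.range (n+1), r^j) * (lam₁^n/(n.factorial:ℝ)) := by
    rw [← Finset.sum_range_reflect (fun j => r^j) (n+1), Finset.sum_mul]
    apply Finset.sum_le_sum
    intro k hk
    have hkn : k ≤ n := Nat.lt_succ_iff.mp (Finset.mem_range.mp hk)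
    simpa using key (n - k) k (by omega)
  set G := ∑ j ∈ Finset.range (n+1), r^j with hG
  have hG0 : 0 ≤ G := Finset.sum_nonneg fun j _ => by positivity
  have hgeom : (lam₁ - lam₂) * G ≤ lam₁ := by
    have h := geom_sum_mul r (n+1)
    have hrp : (0:ℝ) ≤ r^(n+1) := by positivity
    have hml : lam₁ - lam₂ = lam₁ * (1 - r) := by
      rw [hr]; field_simp
    have h2' : (1 - r) * G = 1 - r^(n+1) := by rw [hG]; linear_combination -h
    calc (lam₁ - lam₂) * G = lam₁ * ((1-r)*G) := by rw [hml]; ring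
      _ = lam₁ * (1 - r^(n+1)) := by rw [h2']
      _ ≤ lam₁ := by nlinarith
  -- Stirling / max-term bound
  set s := lam₁ - n with hs
  have hs0 : 0 ≤ s := by rw [hs]; linarith
  have hfact : Real.sqrt lam₂ * ((n:ℝ)/Real.exp 1)^n ≤ (n.factorial:ℝ) := by
    have h2n : lam₂ ≤ 2*(n:ℝ) := by
      have : (1:ℝ) ≤ (n:ℝ) := by exact_mod_cast hn1
      linarith
    calc Real.sqrt lam₂ * ((n:ℝ)/Real.exp 1)^n
        ≤ Real.sqrt (2*(n:ℝ)) * ((n:ℝ)/Real.exp 1)^n :=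
          mul_le_mul_of_nonneg_right (Real.sqrt_le_sqrt h2n) (by positivity)
      _ ≤ (n.factorial:ℝ) := factorial_ge hn1
  have hpow : (lam₁/(n:ℝ))^n ≤ Real.exp (s - s^2/(2*lam₁)) := by
    have hu : 0 ≤ s/(n:ℝ) := by positivity
    have h := one_add_le_exp_quad hu
    have hln : lam₁/(n:ℝ) = 1 + s/(n:ℝ) := by
      rw [hs]; field_simp; ring
    have hmono : (lam₁/(n:ℝ))^n ≤ (Real.exp (s/(n:ℝ) - (s/(n:ℝ))^2/(2*(1+s/(n:ℝ)))))^n := by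
      rw [hln]
      exact pow_le_pow_left₀ (by positivity) h n
    rw [← Real.exp_nat_mul] at hmono
    have harg : (n:ℝ) * (s/(n:ℝ) - (s/(n:ℝ))^2/(2*(1+s/(n:ℝ)))) = s - s^2/(2*lam₁) := by
      have hl1n : lam₁ = (n:ℝ) + s := by rw [hs]; ring
      rw [hl1n]
      have hns : (0:ℝ) < (n:ℝ) + s := by linarith
      field_simp
    rwa [harg] at hmono
  have hterm : lam₁^n/(n.factorial:ℝ) ≤ Real.exp (lam₁ - s^2/(2*lam₁)) / Real.sqrt lam₂ := by
    have hsq : (0:ℝ) < Real.sqrt lam₂ := Real.sqrt_pos.mpr hl2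
    have hden : (0:ℝ) < Real.sqrt lam₂ * ((n:ℝ)/Real.exp 1)^n := by positivity
    have h1' : lam₁^n/(n.factorial:ℝ) ≤ lam₁^n/(Real.sqrt lam₂ * ((n:ℝ)/Real.exp 1)^n) := by
      apply div_le_div_of_nonneg_left (by positivity) hden hfact
    have heq : lam₁^n/(Real.sqrt lam₂ * ((n:ℝ)/Real.exp 1)^n)
        = (lam₁/(n:ℝ))^n * Real.exp 1 ^ n / Real.sqrt lam₂ := by
      rw [div_pow, div_pow]
      field_simp
    rw [heq] at h1'
    refine le_trans h1' ?_
    rw [div_le_div_iff₀ (by positivity) hsq]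
    have hE : Real.exp (s - s^2/(2*lam₁)) * Real.exp 1 ^ n = Real.exp (lam₁ - s^2/(2*lam₁)) := by
      rw [← Real.exp_nat_mul, ← Real.exp_add]
      congr 1
      rw [hs]; ring
    calc (lam₁/(n:ℝ))^n * Real.exp 1 ^ n * Real.sqrt lam₂
        ≤ Real.exp (s - s^2/(2*lam₁)) * Real.exp 1 ^ n * Real.sqrt lam₂ :=
          mul_le_mul_of_nonneg_right (mul_le_mul_of_nonneg_right hpow (by positivity)) hsq.le
      _ = Real.exp (lam₁ - s^2/(2*lam₁)) * Real.sqrt lam₂ := by rw [← hE]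
  -- the scalar bound
  have hfin : lam₁ * Real.exp (-(s^2/(2*lam₁))) ≤ 4*lam₂ := by
    rcases le_or_gt lam₁ (2*lam₂) with hc | hc
    · have : Real.exp (-(s^2/(2*lam₁))) ≤ 1 := Real.exp_le_one_iff.mpr (neg_nonpos.mpr (by positivity))
      nlinarith [Real.exp_pos (-(s^2/(2*lam₁)))]
    · have hst : lam₂ < s := by rw [hs]; linarith
      have hsp : (0:ℝ) < s := by linarith
      have hl2s : lam₁ ≤ 2*s := by rw [hs] at hst ⊢; linarith [hnle]
      have hmon : Real.exp (-(s^2/(2*lam₁))) ≤ Real.exp (-(s/4)) := by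
        apply Real.exp_le_exp.mpr
        rw [neg_le_neg_iff]
        rw [le_div_iff₀ (by linarith : (0:ℝ) < 2*lam₁)]
        nlinarith
      have hx := xexp_le hsp.le
      calc lam₁ * Real.exp (-(s^2/(2*lam₁))) ≤ (2*s) * Real.exp (-(s/4)) := by
            apply mul_le_mul hl2s hmon (Real.exp_pos _).le (by linarith)
        _ ≤ 4 := by linarith
        _ ≤ 4*lam₂ := by linarith
  -- assemble
  have hsq : (0:ℝ) < Real.sqrt lam₂ := Real.sqrt_pos.mpr hl2
  have hrewrite : ∑ k ∈ Finset.range (n+1), Real.exp (-lam₁) * lam₁^k / (k.factorial:ℝ)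
      = Real.exp (-lam₁) * ∑ k ∈ Finset.range (n+1), lam₁^k/(k.factorial:ℝ) := by
    rw [Finset.mul_sum]
    exact Finset.sum_congr rfl fun k _ => by ring
  rw [hrewrite]
  have ht0 : 0 ≤ lam₁ - lam₂ := by linarith
  have hS0 : 0 ≤ ∑ k ∈ Finset.range (n+1), lam₁^k/(k.factorial:ℝ) :=
    Finset.sum_nonneg fun k _ => by positivity
  have htermpos : (0:ℝ) ≤ lam₁^n/(n.factorial:ℝ) := by positivity
  calc (lam₁ - lam₂) * (Real.exp (-lam₁) * ∑ k ∈ Finset.range (n+1), lam₁^k/(k.factorial:ℝ))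
      ≤ (lam₁ - lam₂) * (Real.exp (-lam₁) * (G * (lam₁^n/(n.factorial:ℝ)))) := by
        apply mul_le_mul_of_nonneg_left _ ht0
        apply mul_le_mul_of_nonneg_left _ (Real.exp_pos _).le
        simpa [mul_comm] using hsum2
    _ = Real.exp (-lam₁) * (lam₁^n/(n.factorial:ℝ)) * ((lam₁ - lam₂) * G) := by ring
    _ ≤ Real.exp (-lam₁) * (lam₁^n/(n.factorial:ℝ)) * lam₁ := by
        apply mul_le_mul_of_nonneg_left hgeom (by positivity)
    _ ≤ Real.exp (-lam₁) * (Real.exp (lam₁ - s^2/(2*lam₁)) / Real.sqrt lam₂) * lam₁ := by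
        apply mul_le_mul_of_nonneg_right _ hl1.le
        exact mul_le_mul_of_nonneg_left hterm (Real.exp_pos _).le
    _ = Real.exp (-lam₁) * Real.exp (lam₁ - s^2/(2*lam₁)) * lam₁ / Real.sqrt lam₂ := by ring
    _ = Real.exp (-lam₁ + (lam₁ - s^2/(2*lam₁))) * lam₁ / Real.sqrt lam₂ := by
        rw [← Real.exp_add]
    _ = lam₁ * Real.exp (-(s^2/(2*lam₁))) / Real.sqrt lam₂ := by
        rw [show -lam₁ + (lam₁ - s^2/(2*lam₁)) = -(s^2/(2*lam₁)) from by ring]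
        ring
    _ ≤ 4*lam₂ / Real.sqrt lam₂ := by
        gcongr
    _ = 4 * Real.sqrt lam₂ := by
        rw [mul_div_assoc, Real.div_sqrt]
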